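/- Let G : ℝ → ℝ be strictly convex with subgradient G′, and define the scoring function S(𝔞, y) := G(y) − G(𝔞) + G′(𝔞)(𝔞 − y). Let Y be an integrable real-valued random variable with E|G(Y)| < ∞. Then S is strictly consistent for the mean: E[S(E[Y], Y)] ≤ E[S(𝔞, Y)] for every 𝔞 ∈ ℝ, with strict inequality whenever 𝔞 ≠ E[Y]. -/

import Mathlib

open MeasureTheory

/-- The scoring function `S(𝔞,y) = G(y) − G(𝔞) + G′(𝔞)(𝔞 − y)`, built from a strictly
convex `G` with subgradient `G′`, is strictly consistent for the mean. -/
theorem mean_score_strictly_consistent {Ω : Type*} [MeasurableSpace Ω] (P : Measure Ω)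
    [IsProbabilityMeasure P] (G G' : ℝ → ℝ)
    -- G is strictly convex with subgradient G'
    (hG : ∀ x y : ℝ, G x + G' x * (y - x) ≤ G y)
    (hGstrict : ∀ x y : ℝ, y ≠ x → G x + G' x * (y - x) < G y)
    (Y : Ω → ℝ) (hYm : Measurable Y) (hY : Integrable Y P)
    (hGY : Integrable (fun ω => G (Y ω)) P)
    (S : ℝ → ℝ → ℝ)
    (hS : ∀ a y : ℝ, S a y = G y - G a + G' a * (a - y)) :
    (∀ a : ℝ, ∫ ω, S (∫ ω', Y ω' ∂P) (Y ω) ∂P ≤ ∫ ω, S a (Y ω) ∂P) ∧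
    (∀ a : ℝ, a ≠ ∫ ω', Y ω' ∂P →
      ∫ ω, S (∫ ω', Y ω' ∂P) (Y ω) ∂P < ∫ ω, S a (Y ω) ∂P) := by
  set μ := ∫ ω', Y ω' ∂P with hμ
  have key : ∀ a : ℝ, ∫ ω, S a (Y ω) ∂P
      = (∫ ω, G (Y ω) ∂P) - G a + G' a * (a - μ) := by
    intro a
    simp only [hS]
    have h1 : Integrable (fun ω => G (Y ω) - G a) P := hGY.sub (integrable_const _)
    have h2 : Integrable (fun ω => G' a * (a - Y ω)) P :=
      ((integrable_const a).sub hY).const_mul _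
    rw [integral_add h1 h2, integral_sub hGY (integrable_const _), integral_const_mul,
      integral_sub (integrable_const a) hY, integral_const]
    simp [hμ]
  have main : ∀ a : ℝ, ∫ ω, S μ (Y ω) ∂P ≤ ∫ ω, S a (Y ω) ∂P := by
    intro a
    rw [key, key]
    have := hG a μ
    nlinarith
  refine ⟨main, fun a ha => ?_⟩
  rw [key, key]
  have := hGstrict a μ (fun h => ha h.symm)
  nlinarith
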